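/- Let M be an n×n matrix with entries in {0,1}, n ≥ 2, such that some column of M has exactly one entry equal to 0 and the remaining n-1 entries equal to 1. Then |det(M)| ≤ 2·α_{n-1}. -/

import Mathlib

/-- A square real matrix has all entries in {0,1}. -/
def IsZeroOne {k : ℕ} (M : Matrix (Fin k) (Fin k) ℝ) : Prop :=
  ∀ i j, M i j = 0 ∨ M i j = 1

/-- `alpha k` is the maximum of `|det M|` over k×k 0–1 matrices. -/
noncomputable def alpha (k : ℕ) : ℝ :=
  sSup {x : ℝ | ∃ M : Matrix (Fin k) (Fin k) ℝ, IsZeroOne M ∧ x = |M.det|}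

lemma abs_det_le_factorial {k : ℕ} {A : Matrix (Fin k) (Fin k) ℝ} (hA : IsZeroOne A) :
    |A.det| ≤ (Fintype.card (Equiv.Perm (Fin k)) : ℝ) := by
  rw [Matrix.det_apply']
  calc |∑ σ : Equiv.Perm (Fin k), (Equiv.Perm.sign σ : ℝ) * ∏ i, A (σ i) i|
      ≤ ∑ σ : Equiv.Perm (Fin k), |(Equiv.Perm.sign σ : ℝ) * ∏ i, A (σ i) i| :=
        Finset.abs_sum_le_sum_abs _ _
    _ ≤ ∑ _σ : Equiv.Perm (Fin k), (1 : ℝ) := by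
        apply Finset.sum_le_sum
        intro σ _
        rw [abs_mul]
        have h1 : |(Equiv.Perm.sign σ : ℝ)| = 1 := by
          rcases Int.units_eq_one_or (Equiv.Perm.sign σ) with h | h <;> simp [h]
        rw [h1, one_mul, Finset.abs_prod]
        apply Finset.prod_le_one
        · intro i _; positivity
        · intro i _
          rcases hA (σ i) i with h | h <;> simp [h]
    _ = (Fintype.card (Equiv.Perm (Fin k)) : ℝ) := by simp

lemma abs_det_le_alpha {k : ℕ} {A : Matrix (Fin k) (Fin k) ℝ} (hA : IsZeroOne A) :
    |A.det| ≤ alpha k := by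
  apply le_csSup
  · exact ⟨_, fun x ⟨B, hB, hx⟩ => hx ▸ abs_det_le_factorial hB⟩
  · exact ⟨A, hA, rfl⟩

lemma abs_det_updateColumn_single {m : ℕ} (X : Matrix (Fin (m + 1)) (Fin (m + 1)) ℝ)
    (i₀ j : Fin (m + 1)) :
    |(X.updateCol j (Pi.single i₀ 1)).det| =
      abs ((X.transpose.submatrix j.succAbove i₀.succAbove).det) := by
  rw [← Matrix.det_transpose (X.updateCol j (Pi.single i₀ 1)),
    ← Matrix.updateRow_transpose, ← Matrix.adjugate_apply,
    Matrix.adjugate_fin_succ_eq_det_submatrix, abs_mul]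
  have h : |((-1 : ℝ)) ^ ((j : ℕ) + (i₀ : ℕ))| = 1 := by
    rw [abs_pow, abs_neg, abs_one, one_pow]
  rw [h, one_mul]

theorem stmt_1 {n : ℕ} (hn : 2 ≤ n) (M : Matrix (Fin n) (Fin n) ℝ)
    (hM : IsZeroOne M) (j : Fin n) (i₀ : Fin n)
    (h0 : M i₀ j = 0) (h1 : ∀ i, i ≠ i₀ → M i j = 1) :
    |M.det| ≤ 2 * alpha (n - 1) := by
  obtain ⟨m, rfl⟩ : ∃ m, n = m + 1 := ⟨n - 1, (Nat.succ_pred_eq_of_pos (by omega)).symm⟩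
  have hm : (m + 1) - 1 = m := rfl
  rw [hm]
  set M₁ := M.updateCol j (fun _ => (1 : ℝ)) with hM₁def
  set M₀ := M.updateCol j (Pi.single i₀ (1 : ℝ)) with hM₀def
  -- Step A: det M = det M₁ - det M₀
  have hsplit : M.det = M₁.det - M₀.det := by
    have hcol : M = M.updateCol j
        ((fun _ => (1 : ℝ)) + (-1 : ℝ) • (Pi.single i₀ (1 : ℝ) : Fin (m + 1) → ℝ)) := by
      ext a b
      rw [Matrix.updateCol_apply]
      split_ifs with h
      · subst h
        by_cases ha : a = i₀
        · subst ha; simp [h0]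
        · simp [h1 a ha, Pi.single_eq_of_ne ha]
      · rfl
    calc M.det = (M.updateCol j
          ((fun _ => (1 : ℝ)) + (-1 : ℝ) • (Pi.single i₀ (1 : ℝ) : Fin (m + 1) → ℝ))).det := by
          rw [← hcol]
      _ = M₁.det + (-1 : ℝ) * M₀.det := by
          rw [Matrix.det_updateCol_add, Matrix.det_updateCol_smul]
      _ = M₁.det - M₀.det := by ring
  -- Step B: |det M₀| ≤ alpha m
  have hB : |M₀.det| ≤ alpha m := by
    rw [hM₀def, abs_det_updateColumn_single]
    apply abs_det_le_alpha
    intro a b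
    exact hM _ _
  -- Step C: |det M₁| ≤ alpha m
  have hC : |M₁.det| ≤ alpha m := by
    set u : Fin (m + 1) → ℝ := fun i => if i = i₀ then 0 else -1 with hu
    set E : Matrix (Fin (m + 1)) (Fin (m + 1)) ℝ :=
      1 + Matrix.replicateCol (Fin 1) u * Matrix.replicateRow (Fin 1) (Pi.single i₀ (1 : ℝ)) with hE
    have hdetE : E.det = 1 := by
      rw [hE]
      refine (Matrix.det_one_add_replicateCol_mul_replicateRow (ι := Fin 1) u
        (Pi.single i₀ (1 : ℝ))).trans ?_
      rw [single_dotProduct]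
      simp [hu]
    set M₂ := E * M₁ with hM₂
    have hM₂apply : ∀ i k, M₂ i k = M₁ i k + u i * M₁ i₀ k := by
      intro i k
      rw [hM₂, hE, Matrix.add_mul, Matrix.one_mul, Matrix.add_apply]
      congr 1
      rw [Matrix.mul_apply]
      rw [Finset.sum_congr rfl (fun l _ => by
        show (Matrix.replicateCol (Fin 1) u * Matrix.replicateRow (Fin 1) (Pi.single i₀ (1:ℝ))) i l * M₁ l k
            = (if l = i₀ then u i * M₁ l k else 0)
        rw [Matrix.mul_apply, Fin.sum_univ_one, Matrix.replicateCol_apply, Matrix.replicateRow_apply]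
        by_cases hl : l = i₀
        · subst hl; rw [if_pos rfl, Pi.single_eq_same, mul_one]
        · rw [if_neg hl, Pi.single_eq_of_ne hl, mul_zero, zero_mul])]
      simp
    have hdet12 : M₂.det = M₁.det := by
      rw [hM₂, Matrix.det_mul, hdetE, one_mul]
    have hcolM₂ : ∀ i, M₂ i j = (Pi.single i₀ (1 : ℝ) : Fin (m + 1) → ℝ) i := by
      intro i
      rw [hM₂apply]
      have e1 : M₁ i j = 1 := by rw [hM₁def]; simp [Matrix.updateCol_apply]
      have e2 : M₁ i₀ j = 1 := by rw [hM₁def]; simp [Matrix.updateCol_apply]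
      rw [e1, e2]
      by_cases hi : i = i₀
      · subst hi; simp [hu]
      · simp [hu, hi, Pi.single_eq_of_ne hi]
    have hupd : M₂.updateCol j (Pi.single i₀ (1 : ℝ)) = M₂ := by
      have h : (Pi.single i₀ (1 : ℝ) : Fin (m + 1) → ℝ) = fun i => M₂ i j := by
        funext i; rw [hcolM₂]
      rw [h, Matrix.updateCol_eq_self]
    have key : |M₁.det| = abs ((M₂.transpose.submatrix j.succAbove i₀.succAbove).det) := by
      rw [← hdet12, ← hupd, abs_det_updateColumn_single, hupd]
    rw [key]
    -- Now flip rows of the submatrix to a 0-1 matrix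
    set s : Fin m → ℝ := fun a => if M i₀ (j.succAbove a) = 1 then -1 else 1 with hs
    set B' : Matrix (Fin m) (Fin m) ℝ := Matrix.of fun a b =>
      if M i₀ (j.succAbove a) = 1 then 1 - M (i₀.succAbove b) (j.succAbove a)
      else M (i₀.succAbove b) (j.succAbove a) with hB'
    have hBeq : M₂.transpose.submatrix j.succAbove i₀.succAbove = Matrix.of fun a b => s a * B' a b := by
      ext a b
      have hr : i₀.succAbove b ≠ i₀ := Fin.succAbove_ne i₀ b
      have hc : j.succAbove a ≠ j := Fin.succAbove_ne j a
      have hM₁e : ∀ i, M₁ i (j.succAbove a) = M i (j.succAbove a) := by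
        intro i; rw [hM₁def, Matrix.updateCol_apply, if_neg hc]
      have h : M₂.transpose.submatrix j.succAbove i₀.succAbove a b
          = M (i₀.succAbove b) (j.succAbove a) - M i₀ (j.succAbove a) := by
        simp only [Matrix.submatrix_apply, Matrix.transpose_apply]
        rw [hM₂apply, hM₁e, hM₁e, hu]
        simp only [if_neg hr]
        ring
      rw [h]
      simp only [Matrix.of_apply, hs, hB']
      rcases hM i₀ (j.succAbove a) with h' | h' <;> simp [h']
    rw [hBeq]
    have h : (Matrix.of fun a b => s a * B' a b).det = (∏ a, s a) * B'.det :=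
      Matrix.det_mul_column s B'
    rw [h, abs_mul]
    have habs : |∏ a, s a| = 1 := by
      rw [Finset.abs_prod]
      apply Finset.prod_eq_one
      intro a _
      by_cases h' : M i₀ (j.succAbove a) = 1 <;> simp [hs, h']
    rw [habs, one_mul]
    apply abs_det_le_alpha
    intro a b
    rw [hB']
    rcases hM (i₀.succAbove b) (j.succAbove a) with h' | h' <;>
      simp only [Matrix.of_apply] <;> split_ifs <;> simp [h']
  calc |M.det| = |M₁.det - M₀.det| := by rw [hsplit]
    _ ≤ |M₁.det| + |M₀.det| := by
        rw [sub_eq_add_neg]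
        exact (abs_add_le _ _).trans (by rw [abs_neg])
    _ ≤ alpha m + alpha m := add_le_add hC hB
    _ = 2 * alpha m := by ring
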